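/- Fix positive constants λ₁, λ₂, a₁, a₂ with a_j = p_j λ_j P̂_j^{2/α_j}. Then f(r) = 2π p₁ λ₁ r · exp( −π Σ_{j=1}^{2} p_j λ_j P̂_j^{2/α_j} r^{2/α̂_j} ) with α̂_j = α_j/α_i integrates over r ∈ [0,∞) to the association probability A = P[ nearest tier-1 biased power exceeds tier-2 ]; in the special case α₁ = α₂ (so α̂_j = 1), ∫₀^∞ f(r) dr = p₁λ₁ P̂₁^{2/α} / ( p₁λ₁ P̂₁^{2/α} + p₂λ₂ P̂₂^{2/α} ). -/

import Mathlib

open MeasureTheory Real Set Filter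

lemma aux_integral {b : ℝ} (hb : 0 < b) :
    ∫ r in Ioi (0 : ℝ), r * Real.exp (-b * r ^ 2) = 1 / (2 * b) := by
  have hderiv : ∀ x ∈ Ici (0 : ℝ),
      HasDerivAt (fun r : ℝ => -Real.exp (-b * r ^ 2) / (2 * b))
        (x * Real.exp (-b * x ^ 2)) x := by
    intro x _
    have h : HasDerivAt (fun r : ℝ => -b * r ^ 2) (-b * (2 * x)) x := by
      simpa using ((hasDerivAt_pow 2 x).const_mul (-b))
    have := ((h.exp.neg).div_const (2 * b))
    convert this using 1
    · rfl
    · rfl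
    · rfl
    rw [eq_div_iff (by positivity)]
    ring
  have hint : IntegrableOn (fun r : ℝ => r * Real.exp (-b * r ^ 2)) (Ioi 0) := by
    have := integrableOn_rpow_mul_exp_neg_mul_sq hb (s := 1) (by norm_num)
    refine this.congr_fun (fun x hx => ?_) measurableSet_Ioi
    simp only [Real.rpow_one]
  have htend : Tendsto (fun r : ℝ => -Real.exp (-b * r ^ 2) / (2 * b)) atTop (nhds 0) := by
    have : Tendsto (fun r : ℝ => -b * r ^ 2) atTop atBot := by
      apply Tendsto.const_mul_atTop_of_neg (neg_neg_iff_pos.mpr hb)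
      exact tendsto_pow_atTop two_ne_zero
    have := (Real.tendsto_exp_atBot.comp this).neg.div_const (2 * b)
    simpa using this
  have := integral_Ioi_of_hasDerivAt_of_tendsto' hderiv hint htend
  rw [this]
  simp
  ring

/-- Max-biased-received-power association probability (equal path-loss exponents).
With two PPP tiers of effective densities `p_j λ_j`, power bias factors `P̂_j` (and `P̂₁ = 1`
for the serving tier), equal path loss exponents `α₁ = α₂ = α` (so `α̂_j = 1`), the serving
distance PDF `f(r) = 2π p₁ λ₁ r exp(−π Σ_j p_j λ_j P̂_j^(2/α) r²)` integrates over
`[0,∞)` to `p₁λ₁ P̂₁^(2/α) / (p₁λ₁ P̂₁^(2/α) + p₂λ₂ P̂₂^(2/α))`. -/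
theorem association_probability_equal_exponents
    (p₁ p₂ l₁ l₂ α Phat₁ Phat₂ : ℝ)
    (hp₁ : 0 < p₁) (hp₂ : 0 < p₂) (hl₁ : 0 < l₁) (hl₂ : 0 < l₂) (hα : 0 < α)
    (hP₁ : Phat₁ = 1) (hP₂ : 0 < Phat₂) :
    ∫ r in Ioi (0 : ℝ),
        2 * π * p₁ * l₁ * r *
          Real.exp (-π * (p₁ * l₁ * Phat₁ ^ (2 / α) + p₂ * l₂ * Phat₂ ^ (2 / α)) * r ^ 2) =
      p₁ * l₁ * Phat₁ ^ (2 / α) /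
        (p₁ * l₁ * Phat₁ ^ (2 / α) + p₂ * l₂ * Phat₂ ^ (2 / α)) := by
  subst hP₁
  set c : ℝ := p₁ * l₁ * (1 : ℝ) ^ (2 / α) + p₂ * l₂ * Phat₂ ^ (2 / α) with hc
  have hc1 : (1 : ℝ) ^ (2 / α) = 1 := one_rpow _
  have hP2pos : 0 < Phat₂ ^ (2 / α) := Real.rpow_pos_of_pos hP₂ _
  have hcpos : 0 < c := by positivity
  have hb : 0 < π * c := by positivity
  calc ∫ r in Ioi (0 : ℝ), 2 * π * p₁ * l₁ * r * Real.exp (-π * c * r ^ 2)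
      = 2 * π * p₁ * l₁ * ∫ r in Ioi (0 : ℝ), r * Real.exp (-(π * c) * r ^ 2) := by
        rw [← integral_const_mul]
        congr 1 with r
        ring_nf
    _ = 2 * π * p₁ * l₁ * (1 / (2 * (π * c))) := by rw [aux_integral hb]
    _ = p₁ * l₁ * (1 : ℝ) ^ (2 / α) / c := by
        rw [hc1]
        field_simp
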